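/- If q ∈ 𝕀 is primitive, then there exists a quaternion z ∈ 𝕀 with tr(qz̄) = 1. -/

import Mathlib

noncomputable section

open Quaternion Classical

/-- √5 as a real number. -/
def sqrt5 : ℝ := Real.sqrt 5

/-- The golden ratio τ = (1+√5)/2. -/
def gold : ℝ := (1 + sqrt5) / 2

/-- membership in K = ℚ(√5) ⊆ ℝ. -/
def inK (x : ℝ) : Prop := ∃ a b : ℚ, x = (a : ℝ) + (b : ℝ) * sqrt5

/-- The nontrivial field automorphism of K = ℚ(√5) (√5 ↦ -√5), extended by the
identity outside K.  Since `1, √5` are linearly independent over ℚ, the rational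
coordinates of an element of K are unique, so this is well defined. -/
noncomputable def conjK (x : ℝ) : ℝ :=
  if h : ∃ a b : ℚ, x = (a : ℝ) + (b : ℝ) * sqrt5 then
    (h.choose : ℝ) - (h.choose_spec.choose : ℝ) * sqrt5
  else x

/-- membership in 𝔬 = ℤ[τ], the ring of integers of ℚ(√5). -/
def inO (x : ℝ) : Prop := ∃ m n : ℤ, x = (m : ℝ) + (n : ℝ) * gold

/-- The twist map (a,b,c,d) ↦ (a',b',d',c') on quaternions. -/
noncomputable def twist (q : ℍ[ℝ]) : ℍ[ℝ] :=
  ⟨conjK q.re, conjK q.imI, conjK q.imK, conjK q.imJ⟩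

/-- reduced norm nr(q) = q q̄ (as a real number). -/
def nr (q : ℍ[ℝ]) : ℝ := (q * star q).re

/-- reduced trace tr(q) = q + q̄ (as a real number). -/
def trq (q : ℍ[ℝ]) : ℝ := (q + star q).re

/-- generators of the icosian ring. -/
def e₁ : ℍ[ℝ] := ⟨1, 0, 0, 0⟩
def e₂ : ℍ[ℝ] := ⟨0, 1, 0, 0⟩
def e₃ : ℍ[ℝ] := ⟨1/2, 1/2, 1/2, 1/2⟩
def e₄ : ℍ[ℝ] := ⟨(1 - gold)/2, gold/2, 0, 1/2⟩

/-- membership in the icosian ring 𝕀, the 𝔬-span of the four generators. -/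
def inI (q : ℍ[ℝ]) : Prop :=
  ∃ c₁ c₂ c₃ c₄ : ℝ, inO c₁ ∧ inO c₂ ∧ inO c₃ ∧ inO c₄ ∧
    q = c₁ • e₁ + c₂ • e₂ + c₃ • e₃ + c₄ • e₄

/-- generators of the copy L of the root lattice A₄. -/
def g₁ : ℍ[ℝ] := ⟨1, 0, 0, 0⟩
def g₂ : ℍ[ℝ] := ⟨-1/2, 1/2, 1/2, 1/2⟩
def g₃ : ℍ[ℝ] := ⟨0, -1, 0, 0⟩
def g₄ : ℍ[ℝ] := ⟨0, 1/2, (gold - 1)/2, -gold/2⟩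

/-- L, the ℤ-span of the four generators, as an additive subgroup of ℍ(ℝ). -/
def Lgrp : AddSubgroup ℍ[ℝ] := AddSubgroup.closure {g₁, g₂, g₃, g₄}

/-- `q` is a primitive icosian. -/
def PrimitiveIcosian (q : ℍ[ℝ]) : Prop :=
  inI q ∧ ∀ α : ℝ, inK α → inI (α • q) → inO α

/-- `q` is admissible with |q q̃| = n. -/
def Admissible (q : ℍ[ℝ]) (n : ℕ) : Prop :=
  nr q * conjK (nr q) = (n : ℝ) ^ 2

/-- The additive map x ↦ r • (q x q̃) on ℍ(ℝ). -/
noncomputable def rotHom (q : ℍ[ℝ]) (r : ℝ) : ℍ[ℝ] →+ ℍ[ℝ] where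
  toFun x := r • (q * x * twist q)
  map_zero' := by simp
  map_add' x y := by
    simp [mul_add, add_mul, smul_add]

/-- Commensurateness of two additive subgroups of ℍ(ℝ). -/
def Commensurate (A B : AddSubgroup ℍ[ℝ]) : Prop :=
  (A ⊓ B).relIndex A ≠ 0 ∧ (A ⊓ B).relIndex B ≠ 0

/-- Image of an additive subgroup under a linear isometry of ℍ(ℝ) ≅ ℝ⁴. -/
def mapIso (R : ℍ[ℝ] ≃ₗᵢ[ℝ] ℍ[ℝ]) (A : AddSubgroup ℍ[ℝ]) : AddSubgroup ℍ[ℝ] :=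
  A.map (R.toLinearEquiv.toLinearMap.toAddMonoidHom)

/-- `R` lies in SO(4,ℝ). -/
def IsRotation (R : ℍ[ℝ] ≃ₗᵢ[ℝ] ℍ[ℝ]) : Prop :=
  LinearMap.det (R.toLinearEquiv.toLinearMap) = 1


/-! ### Auxiliary machinery for the main theorem -/

lemma sqrt5_sq : sqrt5 ^ 2 = 5 := by simp [sqrt5, Real.sq_sqrt]

lemma gold_sq' : gold ^ 2 = gold + 1 := by unfold gold; linear_combination sqrt5_sq / 4

lemma irr5 : Irrational sqrt5 := (by norm_num : Nat.Prime 5).irrational_sqrt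

lemma rat_sqrt5 (a b : ℚ) (h : (a:ℝ) + (b:ℝ) * sqrt5 = 0) : a = 0 ∧ b = 0 := by
  by_cases hb : b = 0
  · subst hb; simp at h; exact ⟨by exact_mod_cast h, rfl⟩
  · exfalso
    have : sqrt5 = ((-a/b : ℚ) : ℝ) := by push_cast; field_simp; nlinarith [h]
    exact irr5 ⟨(-a/b : ℚ), this.symm⟩

lemma rat_gold (a b : ℚ) (h : (a:ℝ) + (b:ℝ) * gold = 0) : a = 0 ∧ b = 0 := by
  have h2 : ((a + b/2 : ℚ) : ℝ) + ((b/2 : ℚ) : ℝ) * sqrt5 = 0 := by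
    push_cast; unfold gold at h; linarith
  obtain ⟨h3, h4⟩ := rat_sqrt5 _ _ h2
  have hb : b = 0 := by linarith [(by exact_mod_cast h4 : b/2 = (0:ℚ))]
  exact ⟨by linarith [h3, hb ▸ h3], hb⟩

/-- pair multiplication: ℤ[τ] in coordinates. -/
def pmulP (p q : ℤ × ℤ) : ℤ × ℤ := (p.1*q.1 + p.2*q.2, p.1*q.2 + p.2*q.1 + p.2*q.2)

/-- field norm on ℤ[τ] in coordinates. -/
def NfP (p : ℤ × ℤ) : ℤ := p.1^2 + p.1*p.2 - p.2^2

/-- realization map ℤ×ℤ → ℝ, (m,n) ↦ m + nτ. -/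
def omP (p : ℤ × ℤ) : ℝ := (p.1 : ℝ) + (p.2 : ℝ) * gold

lemma omP_add (p q : ℤ × ℤ) : omP (p + q) = omP p + omP q := by
  simp [omP, Prod.fst_add, Prod.snd_add]; push_cast; ring

lemma omP_sub (p q : ℤ × ℤ) : omP (p - q) = omP p - omP q := by
  simp [omP, Prod.fst_sub, Prod.snd_sub]; push_cast; ring

lemma omP_mul (p q : ℤ × ℤ) : omP (pmulP p q) = omP p * omP q := by
  simp [omP, pmulP]; push_cast; linear_combination (-(p.2 : ℝ) * q.2) * gold_sq'

lemma omP_zero_iff (p : ℤ × ℤ) : omP p = 0 ↔ p = 0 := by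
  constructor
  · intro h
    obtain ⟨h1, h2⟩ := rat_gold p.1 p.2 (by push_cast; exact_mod_cast h)
    exact Prod.ext (by exact_mod_cast h1) (by exact_mod_cast h2)
  · rintro rfl; simp [omP]

lemma omP_inj {p q : ℤ × ℤ} (h : omP p = omP q) : p = q := by
  have := (omP_zero_iff (p - q)).mp (by rw [omP_sub]; linarith)
  exact sub_eq_zero.mp this

lemma omP_one : omP (1, 0) = 1 := by simp [omP]

lemma omP_conj (p : ℤ × ℤ) : omP p * omP (p.1 + p.2, -p.2) = (NfP p : ℝ) := by
  simp [omP, NfP]; push_cast; linear_combination (-(p.2:ℝ)^2) * gold_sq'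

lemma NfP_zero_iff (p : ℤ × ℤ) : NfP p = 0 ↔ p = 0 := by
  constructor
  · intro h
    have h2 : omP p * omP (p.1 + p.2, -p.2) = 0 := by rw [omP_conj, h]; simp
    rcases mul_eq_zero.mp h2 with h3 | h3
    · exact (omP_zero_iff p).mp h3
    · have h0 := (omP_zero_iff _).mp h3
      have e1 : p.1 + p.2 = 0 := by simpa using congrArg Prod.fst h0
      have e2 : -p.2 = 0 := by simpa using congrArg Prod.snd h0
      have : p = (p.1, p.2) := rfl
      rw [this, Prod.mk_eq_zero]
      omega
  · rintro rfl; simp [NfP]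

lemma inO_omP (p : ℤ × ℤ) : inO (omP p) := ⟨p.1, p.2, rfl⟩

lemma inO_ex {x : ℝ} (h : inO x) : ∃ p : ℤ × ℤ, x = omP p := by
  obtain ⟨m, n, h⟩ := h; exact ⟨(m, n), h⟩

/-! Euclidean division in ℤ[τ] -/

lemma natAbs_lt_of_q {m n : ℤ} (h : |(m:ℚ)| < |(n:ℚ)|) : m.natAbs < n.natAbs := by
  have h' : |m| < |n| := by exact_mod_cast h
  rw [Int.abs_eq_natAbs, Int.abs_eq_natAbs] at h'
  exact_mod_cast h'

lemma key_id (x1 x2 g1 g2 k1 k2 A B : ℚ) (hN : g1^2 + g1*g2 - g2^2 ≠ 0)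
    (hA : A = (x1*g1 + x1*g2 - x2*g2)/(g1^2 + g1*g2 - g2^2))
    (hB : B = (x2*g1 - x1*g2)/(g1^2 + g1*g2 - g2^2)) :
    (x1 - (k1*g1 + k2*g2))^2 + (x1 - (k1*g1 + k2*g2))*(x2 - (k1*g2 + k2*g1 + k2*g2))
      - (x2 - (k1*g2 + k2*g1 + k2*g2))^2
    = ((A - k1)^2 + (A - k1)*(B - k2) - (B - k2)^2) * (g1^2 + g1*g2 - g2^2) := by
  subst hA hB
  have hN' : g1 * (g1 + g2) - g2 ^ 2 ≠ 0 := by convert hN using 1; ring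
  field_simp
  ring

lemma bound_lemma (A B : ℚ) (k1 k2 : ℤ) (h1 : |A - k1| ≤ 1/2) (h2 : |B - k2| ≤ 1/2) :
    |(A - k1)^2 + (A - k1)*(B - k2) - (B - k2)^2| ≤ 3/4 := by
  have e1 : (A - k1)^2 ≤ 1/4 := by nlinarith [sq_abs (A - k1), abs_nonneg (A - k1)]
  have e2 : (B - k2)^2 ≤ 1/4 := by nlinarith [sq_abs (B - k2), abs_nonneg (B - k2)]
  have e3 : |(A - k1)*(B - k2)| ≤ 1/4 := by
    rw [abs_mul]; nlinarith [abs_nonneg (A - k1), abs_nonneg (B - k2)]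
  have e3' := abs_le.mp e3
  rw [abs_le]
  constructor <;> nlinarith [sq_nonneg (A - k1), sq_nonneg (B - k2)]

lemma div_euc (x g : ℤ × ℤ) (hN : NfP g ≠ 0) :
    ∃ k : ℤ × ℤ, (NfP (x - pmulP k g)).natAbs < (NfP g).natAbs := by
  obtain ⟨x1, x2⟩ := x
  obtain ⟨g1, g2⟩ := g
  have hNv : ((NfP (g1, g2) : ℤ) : ℚ) = (g1:ℚ)^2 + g1*g2 - g2^2 := by
    unfold NfP; push_cast; ring
  have hNq : (g1:ℚ)^2 + g1*g2 - g2^2 ≠ 0 := by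
    rw [← hNv]; exact_mod_cast hN
  obtain ⟨A, hA⟩ : ∃ A : ℚ, A = ((x1:ℚ)*g1 + x1*g2 - x2*g2)/((g1:ℚ)^2 + g1*g2 - g2^2) := ⟨_, rfl⟩
  obtain ⟨B, hB⟩ : ∃ B : ℚ, B = ((x2:ℚ)*g1 - x1*g2)/((g1:ℚ)^2 + g1*g2 - g2^2) := ⟨_, rfl⟩
  refine ⟨(round A, round B), ?_⟩
  have key : ((NfP ((x1, x2) - pmulP (round A, round B) (g1, g2)) : ℤ) : ℚ)
      = ((A - round A)^2 + (A - round A)*(B - round B) - (B - round B)^2)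
          * ((g1:ℚ)^2 + g1*g2 - g2^2) := by
    rw [← key_id (x1:ℚ) x2 g1 g2 (round A) (round B) A B hNq hA hB]
    unfold NfP pmulP
    simp only [Prod.mk_sub_mk]
    push_cast
    ring
  apply natAbs_lt_of_q
  rw [key, abs_mul]
  have hbound := bound_lemma A B (round A) (round B) (abs_sub_round A) (abs_sub_round B)
  have hNpos : 0 < |(g1:ℚ)^2 + g1*g2 - g2^2| := abs_pos.mpr hNq
  rw [hNv]
  nlinarith [abs_nonneg ((A - round A)^2 + (A - round A)*(B - round B) - (B - round B)^2)]

/-! ### the 𝔬-span of four pairs, and gcd extraction -/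

def inSpan (p₁ p₂ p₃ p₄ x : ℤ × ℤ) : Prop :=
  ∃ a b c d : ℤ × ℤ, x = pmulP a p₁ + pmulP b p₂ + pmulP c p₃ + pmulP d p₄

lemma pmulP_zero_left (p : ℤ × ℤ) : pmulP 0 p = 0 := by simp [pmulP]

lemma pmulP_one_left (p : ℤ × ℤ) : pmulP (1, 0) p = p := by simp [pmulP]

lemma pmulP_sub_left (a b p : ℤ × ℤ) : pmulP (a - b) p = pmulP a p - pmulP b p := by
  simp [pmulP, Prod.fst_sub, Prod.snd_sub, Prod.mk_sub_mk]; constructor <;> ring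

lemma pmulP_assoc (a b p : ℤ × ℤ) : pmulP a (pmulP b p) = pmulP (pmulP a b) p := by
  simp [pmulP]; constructor <;> ring

lemma pmulP_add_right (a u v : ℤ × ℤ) : pmulP a (u + v) = pmulP a u + pmulP a v := by
  simp [pmulP, Prod.fst_add, Prod.snd_add, Prod.mk_add_mk]; constructor <;> ring

lemma inSpan_sub {p₁ p₂ p₃ p₄ x y : ℤ × ℤ} (hx : inSpan p₁ p₂ p₃ p₄ x)
    (hy : inSpan p₁ p₂ p₃ p₄ y) : inSpan p₁ p₂ p₃ p₄ (x - y) := by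
  obtain ⟨a, b, c, d, rfl⟩ := hx
  obtain ⟨a', b', c', d', rfl⟩ := hy
  refine ⟨a - a', b - b', c - c', d - d', ?_⟩
  simp only [pmulP_sub_left]
  abel

lemma inSpan_pmulP {p₁ p₂ p₃ p₄ x : ℤ × ℤ} (k : ℤ × ℤ) (hx : inSpan p₁ p₂ p₃ p₄ x) :
    inSpan p₁ p₂ p₃ p₄ (pmulP k x) := by
  obtain ⟨a, b, c, d, rfl⟩ := hx
  refine ⟨pmulP k a, pmulP k b, pmulP k c, pmulP k d, ?_⟩
  simp only [pmulP_add_right, pmulP_assoc]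

lemma inSpan_gen₁ (p₁ p₂ p₃ p₄ : ℤ × ℤ) : inSpan p₁ p₂ p₃ p₄ p₁ :=
  ⟨(1,0), 0, 0, 0, by simp [pmulP_one_left, pmulP_zero_left]⟩
lemma inSpan_gen₂ (p₁ p₂ p₃ p₄ : ℤ × ℤ) : inSpan p₁ p₂ p₃ p₄ p₂ :=
  ⟨0, (1,0), 0, 0, by simp [pmulP_one_left, pmulP_zero_left]⟩
lemma inSpan_gen₃ (p₁ p₂ p₃ p₄ : ℤ × ℤ) : inSpan p₁ p₂ p₃ p₄ p₃ :=
  ⟨0, 0, (1,0), 0, by simp [pmulP_one_left, pmulP_zero_left]⟩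
lemma inSpan_gen₄ (p₁ p₂ p₃ p₄ : ℤ × ℤ) : inSpan p₁ p₂ p₃ p₄ p₄ :=
  ⟨0, 0, 0, (1,0), by simp [pmulP_one_left, pmulP_zero_left]⟩

lemma exists_gcd (p₁ p₂ p₃ p₄ : ℤ × ℤ) (hne : ¬(p₁ = 0 ∧ p₂ = 0 ∧ p₃ = 0 ∧ p₄ = 0)) :
    ∃ g : ℤ × ℤ, inSpan p₁ p₂ p₃ p₄ g ∧ g ≠ 0 ∧
      ∀ x, inSpan p₁ p₂ p₃ p₄ x → ∃ k, x = pmulP k g := by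
  set T : Set ℕ := {n | ∃ x, inSpan p₁ p₂ p₃ p₄ x ∧ x ≠ 0 ∧ n = (NfP x).natAbs} with hT
  have hTne : T.Nonempty := by
    rcases not_and_or.mp hne with h | h'
    · exact ⟨_, p₁, inSpan_gen₁ _ _ _ _, h, rfl⟩
    rcases not_and_or.mp h' with h | h''
    · exact ⟨_, p₂, inSpan_gen₂ _ _ _ _, h, rfl⟩
    rcases not_and_or.mp h'' with h | h
    · exact ⟨_, p₃, inSpan_gen₃ _ _ _ _, h, rfl⟩
    · exact ⟨_, p₄, inSpan_gen₄ _ _ _ _, h, rfl⟩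
  obtain ⟨g, hgspan, hgne, hgmin⟩ := Nat.sInf_mem hTne
  refine ⟨g, hgspan, hgne, ?_⟩
  intro x hx
  have hNg : NfP g ≠ 0 := fun h => hgne ((NfP_zero_iff g).mp h)
  obtain ⟨k, hk⟩ := div_euc x g hNg
  refine ⟨k, ?_⟩
  by_cases hr : x - pmulP k g = 0
  · have := sub_eq_zero.mp hr
    exact this
  · exfalso
    have hrs : inSpan p₁ p₂ p₃ p₄ (x - pmulP k g) :=
      inSpan_sub hx (inSpan_pmulP k hgspan)
    have hmem : (NfP (x - pmulP k g)).natAbs ∈ T := ⟨_, hrs, hr, rfl⟩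
    have := Nat.sInf_le hmem
    omega

/-! ### the dual basis of (e₁,e₂,e₃,e₄) in the icosian ring -/

def w₁ : ℍ[ℝ] := ⟨1/2, 0, -gold/2, (gold - 1)/2⟩
def w₂ : ℍ[ℝ] := ⟨0, 1/2, (gold - 1)/2, -gold/2⟩
def w₃ : ℍ[ℝ] := ⟨0, 0, 1, 0⟩
def w₄ : ℍ[ℝ] := ⟨0, 0, -1, 1⟩

lemma trace_formula (c₁ c₂ c₃ c₄ d₁ d₂ d₃ d₄ : ℝ) :
    trq ((c₁ • e₁ + c₂ • e₂ + c₃ • e₃ + c₄ • e₄) *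
        star (d₁ • w₁ + d₂ • w₂ + d₃ • w₃ + d₄ • w₄))
      = d₁*c₁ + d₂*c₂ + d₃*c₃ + d₄*c₄ := by
  simp [trq, Quaternion.re_mul, smul_eq_mul]
  simp [e₁, e₂, e₃, e₄, w₁, w₂, w₃, w₄]
  ring

lemma w_combo (d₁ d₂ d₃ d₄ : ℝ) :
    d₁ • w₁ + d₂ • w₂ + d₃ • w₃ + d₄ • w₄
      = (2*d₁ - d₂ - gold*d₃ + (2*gold - 1)*d₄) • e₁
        + (-d₁ + 2*d₂ + (gold - 1)*d₃ + (1 - 2*gold)*d₄) • e₂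
        + (-gold*d₁ + (gold - 1)*d₂ + 2*d₃ - 2*d₄) • e₃
        + ((2*gold - 1)*d₁ + (1 - 2*gold)*d₂ - 2*d₃ + 4*d₄) • e₄ := by
  refine QuaternionAlgebra.ext ?_ ?_ ?_ ?_ <;>
    simp [smul_eq_mul] <;> simp [e₁, e₂, e₃, e₄, w₁, w₂, w₃, w₄]
  · linear_combination (d₁ - d₂) * gold_sq'
  · linear_combination (d₂ - d₁) * gold_sq'
  · ring
  · ring

lemma inO_zero : inO 0 := ⟨0, 0, by simp⟩
lemma inO_add {x y : ℝ} (hx : inO x) (hy : inO y) : inO (x + y) := by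
  obtain ⟨p, rfl⟩ := inO_ex hx; obtain ⟨q, rfl⟩ := inO_ex hy
  exact (omP_add p q) ▸ inO_omP (p + q)
lemma inO_mul {x y : ℝ} (hx : inO x) (hy : inO y) : inO (x * y) := by
  obtain ⟨p, rfl⟩ := inO_ex hx; obtain ⟨q, rfl⟩ := inO_ex hy
  exact (omP_mul p q) ▸ inO_omP (pmulP p q)
lemma inO_int (m : ℤ) : inO (m : ℝ) := ⟨m, 0, by simp⟩
lemma inO_one : inO (1:ℝ) := ⟨1, 0, by push_cast; ring⟩
lemma inO_two : inO (2:ℝ) := ⟨2, 0, by push_cast; ring⟩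
lemma inO_four : inO (4:ℝ) := ⟨4, 0, by push_cast; ring⟩
lemma inO_gold : inO gold := ⟨0, 1, by simp⟩
lemma inO_sub {x y : ℝ} (hx : inO x) (hy : inO y) : inO (x - y) := by
  obtain ⟨p, rfl⟩ := inO_ex hx; obtain ⟨q, rfl⟩ := inO_ex hy
  exact (omP_sub p q) ▸ inO_omP (p - q)
lemma inO_neg {x : ℝ} (hx : inO x) : inO (-x) := by
  have := inO_sub inO_zero hx; simpa using this


theorem exists_trace_one_of_primitive (q : ℍ[ℝ]) (hprim : PrimitiveIcosian q) :
    ∃ z : ℍ[ℝ], inI z ∧ trq (q * star z) = 1 := by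
  obtain ⟨⟨c₁, c₂, c₃, c₄, h1, h2, h3, h4, hq⟩, hP⟩ := hprim
  obtain ⟨p₁, rfl⟩ := inO_ex h1
  obtain ⟨p₂, rfl⟩ := inO_ex h2
  obtain ⟨p₃, rfl⟩ := inO_ex h3
  obtain ⟨p₄, rfl⟩ := inO_ex h4
  by_cases hz : p₁ = 0 ∧ p₂ = 0 ∧ p₃ = 0 ∧ p₄ = 0
  · -- then q = 0, contradicting primitivity with α = 1/2
    exfalso
    obtain ⟨hz1, hz2, hz3, hz4⟩ := hz
    have hq0 : q = 0 := by
      rw [hq, hz1, hz2, hz3, hz4]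
      simp [omP]
    have hK : inK ((1:ℝ)/2) := ⟨1/2, 0, by push_cast; ring⟩
    have hI : inI (((1:ℝ)/2) • q) := by
      rw [hq0, smul_zero]
      exact ⟨0, 0, 0, 0, inO_zero, inO_zero, inO_zero, inO_zero, by simp⟩
    obtain ⟨m, n, hmn⟩ := hP (1/2) hK hI
    have h2' : (((m:ℚ) - 1/2 : ℚ) : ℝ) + ((n:ℚ) : ℝ) * gold = 0 := by
      push_cast; linarith [hmn]
    obtain ⟨ha, _⟩ := rat_gold _ _ h2'
    have : (2*m : ℚ) = 1 := by linarith [ha]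
    have : (2*m : ℤ) = 1 := by exact_mod_cast this
    omega
  · obtain ⟨g, hgspan, hgne, hgdvd⟩ := exists_gcd p₁ p₂ p₃ p₄ hz
    obtain ⟨k₁, hk₁⟩ := hgdvd p₁ (inSpan_gen₁ _ _ _ _)
    obtain ⟨k₂, hk₂⟩ := hgdvd p₂ (inSpan_gen₂ _ _ _ _)
    obtain ⟨k₃, hk₃⟩ := hgdvd p₃ (inSpan_gen₃ _ _ _ _)
    obtain ⟨k₄, hk₄⟩ := hgdvd p₄ (inSpan_gen₄ _ _ _ _)
    have hNg : NfP g ≠ 0 := fun h => hgne ((NfP_zero_iff g).mp h)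
    have hNgR : ((NfP g : ℤ) : ℝ) ≠ 0 := by exact_mod_cast hNg
    set α : ℝ := omP (g.1 + g.2, -g.2) / ((NfP g : ℤ) : ℝ) with hα
    have hαg : α * omP g = 1 := by
      rw [hα]
      field_simp
      linear_combination omP_conj g
    have hK : inK α := by
      refine ⟨((g.1:ℚ) + (g.2:ℚ)/2) / ((NfP g : ℤ) : ℚ), (-(g.2:ℚ)/2) / ((NfP g : ℤ) : ℚ), ?_⟩
      have hNQ : ((NfP g : ℤ) : ℚ) ≠ 0 := by exact_mod_cast hNg
      rw [hα]
      unfold omP gold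
      push_cast
      field_simp
      ring
    have hcoef : ∀ i : Fin 4, True := fun _ => trivial
    have hc₁ : α * omP p₁ = omP k₁ := by
      rw [hk₁, omP_mul]
      calc α * (omP k₁ * omP g) = omP k₁ * (α * omP g) := by ring
        _ = omP k₁ := by rw [hαg, mul_one]
    have hc₂ : α * omP p₂ = omP k₂ := by
      rw [hk₂, omP_mul]
      calc α * (omP k₂ * omP g) = omP k₂ * (α * omP g) := by ring
        _ = omP k₂ := by rw [hαg, mul_one]
    have hc₃ : α * omP p₃ = omP k₃ := by
      rw [hk₃, omP_mul]
      calc α * (omP k₃ * omP g) = omP k₃ * (α * omP g) := by ring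
        _ = omP k₃ := by rw [hαg, mul_one]
    have hc₄ : α * omP p₄ = omP k₄ := by
      rw [hk₄, omP_mul]
      calc α * (omP k₄ * omP g) = omP k₄ * (α * omP g) := by ring
        _ = omP k₄ := by rw [hαg, mul_one]
    have hI : inI (α • q) := by
      refine ⟨omP k₁, omP k₂, omP k₃, omP k₄, inO_omP _, inO_omP _, inO_omP _, inO_omP _, ?_⟩
      rw [hq, ← hc₁, ← hc₂, ← hc₃, ← hc₄]
      simp only [smul_add, smul_smul]
    obtain ⟨u1, u2, hu⟩ := hP α hK hI
    have huα : α = omP (u1, u2) := hu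
    have hug : pmulP (u1, u2) g = (1, 0) := by
      apply omP_inj
      rw [omP_mul, ← huα, omP_one, hαg]
    have hone : inSpan p₁ p₂ p₃ p₄ (1, 0) := hug ▸ inSpan_pmulP (u1, u2) hgspan
    obtain ⟨a₁, a₂, a₃, a₄, hsum⟩ := hone
    have hsumR : omP a₁ * omP p₁ + omP a₂ * omP p₂ + omP a₃ * omP p₃ + omP a₄ * omP p₄ = 1 := by
      have := congrArg omP hsum
      rw [omP_one] at this
      rw [omP_add, omP_add, omP_add, omP_mul, omP_mul, omP_mul, omP_mul] at this
      linarith [this]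
    refine ⟨omP a₁ • w₁ + omP a₂ • w₂ + omP a₃ • w₃ + omP a₄ • w₄, ?_, ?_⟩
    · rw [w_combo]
      have d1 := inO_omP a₁
      have d2 := inO_omP a₂
      have d3 := inO_omP a₃
      have d4 := inO_omP a₄
      refine ⟨_, _, _, _, ?_, ?_, ?_, ?_, rfl⟩
      · exact inO_add (inO_sub (inO_sub (inO_mul inO_two d1) d2) (inO_mul inO_gold d3))
          (inO_mul (inO_sub (inO_mul inO_two inO_gold) inO_one) d4)
      · exact inO_add (inO_add (inO_add (inO_neg d1) (inO_mul inO_two d2))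
          (inO_mul (inO_sub inO_gold inO_one) d3))
          (inO_mul (inO_sub inO_one (inO_mul inO_two inO_gold)) d4)
      · exact inO_sub (inO_add (inO_add (inO_mul (inO_neg inO_gold) d1)
          (inO_mul (inO_sub inO_gold inO_one) d2)) (inO_mul inO_two d3)) (inO_mul inO_two d4)
      · exact inO_add (inO_sub (inO_add (inO_mul (inO_sub (inO_mul inO_two inO_gold) inO_one) d1)
          (inO_mul (inO_sub inO_one (inO_mul inO_two inO_gold)) d2)) (inO_mul inO_two d3))
          (inO_mul inO_four d4)
    · rw [hq, trace_formula]
      linarith [hsumR]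


end
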